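/- (Greedy approximation for monotone submodular maximization, Nemhauser–Wolsey–Fisher.) Let N be a finite nonempty set and f : 2^N → ℝ a monotone submodular set function with f(∅) = 0. Let G_k be the set of the first k elements chosen by the greedy algorithm that repeatedly adds an element maximizing the marginal gain of f. Then for every 1 ≤ k ≤ |N|, f(G_k) ≥ (1 - (1 - 1/k)^k) · max_{S ⊆ N, |S| = k} f(S); in particular f(G_k) ≥ (1 - 1/e) · max_{S ⊆ N, |S| = k} f(S). Note the greedy algorithm is oblivious to the cardinality constraint k. -/

import Mathlib

open Finset

open Finset

/-- The set of the first `k` players chosen by the ordering `σ`. -/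
def prefixSet {N : Type*} [Fintype N] [DecidableEq N]
    (σ : Fin (Fintype.card N) ≃ N) (k : ℕ) : Finset N :=
  (Finset.univ.filter (fun j : Fin (Fintype.card N) => (j : ℕ) < k)).image σ

/-- `(σ, φ)` is top-k Shapley data for `f`: `σ` orders the players so that each successive
player maximizes the marginal gain of `f` over the set of previously chosen players, and
`φ` assigns to each chosen player exactly that marginal gain (ties resolved arbitrarily). -/
def IsTopkShapley {N : Type*} [Fintype N] [DecidableEq N]
    (f : Finset N → ℝ) (σ : Fin (Fintype.card N) ≃ N) (φ : N → ℝ) : Prop :=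
  ∀ k : Fin (Fintype.card N),
    (∀ i : N, i ∉ prefixSet σ (k : ℕ) →
      f (insert i (prefixSet σ (k : ℕ))) ≤ f (insert (σ k) (prefixSet σ (k : ℕ)))) ∧
    φ (σ k) = f (insert (σ k) (prefixSet σ (k : ℕ))) - f (prefixSet σ (k : ℕ))

/-- A set function is submodular if for every `X` and distinct `x₁, x₂ ∉ X`,
`f (X ∪ {x₁}) + f (X ∪ {x₂}) ≥ f (X ∪ {x₁, x₂}) + f X`. -/
def Submodular {N : Type*} [DecidableEq N] (f : Finset N → ℝ) : Prop :=
  ∀ X : Finset N, ∀ x₁ x₂ : N, x₁ ∉ X → x₂ ∉ X → x₁ ≠ x₂ →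
    f (insert x₁ (insert x₂ X)) + f X ≤ f (insert x₁ X) + f (insert x₂ X)

section aux
variable {N : Type*} [Fintype N] [DecidableEq N]

lemma mem_prefixSet {σ : Fin (Fintype.card N) ≃ N} {m : ℕ} {i : N} :
    i ∈ prefixSet σ m ↔ (σ.symm i : ℕ) < m := by
  simp only [prefixSet, mem_image, mem_filter, mem_univ, true_and]
  constructor
  · rintro ⟨j, hj, rfl⟩; simpa using hj
  · intro h; exact ⟨σ.symm i, h, by simp⟩

lemma prefixSet_zero (σ : Fin (Fintype.card N) ≃ N) : prefixSet σ 0 = (∅ : Finset N) := by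
  ext i; simp [mem_prefixSet]

lemma prefixSet_succ (σ : Fin (Fintype.card N) ≃ N) {j : ℕ} (hj : j < Fintype.card N) :
    prefixSet σ (j+1) = insert (σ ⟨j, hj⟩) (prefixSet σ j) := by
  ext i
  simp only [mem_prefixSet, mem_insert]
  constructor
  · intro h
    rcases Nat.lt_succ_iff_lt_or_eq.1 h with h | h
    · exact Or.inr h
    · left
      have : σ.symm i = ⟨j, hj⟩ := Fin.ext h
      rw [← this]; simp
  · rintro (rfl | h)
    · simp
    · omega

lemma not_mem_prefixSet_self (σ : Fin (Fintype.card N) ≃ N) {j : ℕ} (hj : j < Fintype.card N) :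
    σ ⟨j, hj⟩ ∉ prefixSet σ j := by
  simp [mem_prefixSet]

variable {f : Finset N → ℝ}

lemma marg_antitone (hsub : Submodular f) :
    ∀ n (X Y : Finset N), (Y \ X).card = n → X ⊆ Y → ∀ a, a ∉ Y →
      f (insert a Y) - f Y ≤ f (insert a X) - f X := by
  intro n
  induction n with
  | zero =>
    intro X Y hc hXY a _
    have : Y = X := Finset.Subset.antisymm
      (by simpa [Finset.sdiff_eq_empty_iff_subset] using Finset.card_eq_zero.1 hc) hXY
    rw [this]
  | succ n ih =>
    intro X Y hc hXY a ha
    obtain ⟨b, hb⟩ : (Y \ X).Nonempty := by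
      rw [← Finset.card_pos, hc]; omega
    have hbY : b ∈ Y := (Finset.mem_sdiff.1 hb).1
    have hbX : b ∉ X := (Finset.mem_sdiff.1 hb).2
    set Y' := Y.erase b with hY'
    have hXY' : X ⊆ Y' := fun x hx =>
      Finset.mem_erase.2 ⟨fun h => hbX (h ▸ hx), hXY hx⟩
    have hc' : (Y' \ X).card = n := by
      have : Y' \ X = (Y \ X).erase b := by
        ext x; simp [hY', Finset.mem_sdiff, Finset.mem_erase]; tauto
      rw [this, Finset.card_erase_of_mem hb, hc]
      omega
    have haY' : a ∉ Y' := fun h => ha (Finset.mem_of_mem_erase h)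
    have hbY' : b ∉ Y' := Finset.notMem_erase _ _
    have hab : a ≠ b := fun h => ha (h ▸ hbY)
    have hins : insert b Y' = Y := Finset.insert_erase hbY
    have h1 := hsub Y' a b haY' hbY' hab
    rw [hins] at h1
    have h2 := ih X Y' hc' hXY' a haY'
    linarith

lemma union_bound (hsub : Submodular f) :
    ∀ (T X : Finset N), f (X ∪ T) ≤ f X + ∑ i ∈ T \ X, (f (insert i X) - f X) := by
  intro T
  induction T using Finset.induction_on with
  | empty => intro X; simp
  | @insert a T' haT' ih =>
    intro X
    by_cases haX : a ∈ X
    · rw [Finset.union_insert, Finset.insert_eq_self.2 (Finset.mem_union_left _ haX),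
        Finset.insert_sdiff_of_mem _ haX]
      exact ih X
    · have h1 : X ∪ insert a T' = insert a (X ∪ T') := Finset.union_insert a X T'
      have h2 : insert a T' \ X = insert a (T' \ X) :=
        Finset.insert_sdiff_of_notMem _ haX
      have haT'X : a ∉ T' \ X := fun h => haT' (Finset.mem_sdiff.1 h).1
      have haXT' : a ∉ X ∪ T' := by simp [haX, haT']
      have hm := marg_antitone hsub ((X ∪ T') \ X).card X (X ∪ T') rfl
        Finset.subset_union_left a haXT'
      rw [h1, h2, Finset.sum_insert haT'X]
      have := ih X
      linarith

end aux

/-- **Greedy approximation for monotone submodular maximization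
(Nemhauser–Wolsey–Fisher).** If `f` is monotone and submodular with `f ∅ = 0` and `G_k` is
the set of the first `k` elements chosen greedily (maximizing the marginal gain at each
step, obliviously to the cardinality constraint), then for every `1 ≤ k ≤ |N|` and every
coalition `S` of size `k`,
`(1 - (1 - 1/k)^k) * f S ≤ f G_k`; in particular `(1 - 1/e) * f S ≤ f G_k`. -/
theorem greedy_submodular_approximation
    {N : Type*} [Fintype N] [Nonempty N] [DecidableEq N]
    (f : Finset N → ℝ) (hf : f ∅ = 0)
    (hmono : ∀ S T : Finset N, S ⊆ T → f S ≤ f T) (hsub : Submodular f)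
    (σ : Fin (Fintype.card N) ≃ N) (φ : N → ℝ) (hσφ : IsTopkShapley f σ φ) :
    ∀ k : ℕ, 1 ≤ k → k ≤ Fintype.card N →
      ∀ S : Finset N, S.card = k →
        (1 - (1 - 1 / (k : ℝ)) ^ k) * f S ≤ f (prefixSet σ k) ∧
        (1 - 1 / Real.exp 1) * f S ≤ f (prefixSet σ k) := by
  intro k hk1 hkN S hS
  have hk0 : (0:ℝ) < (k:ℝ) := by positivity
  have hq0 : (0:ℝ) ≤ 1 - 1/(k:ℝ) := by
    rw [sub_nonneg, div_le_one hk0]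
    exact_mod_cast hk1
  have hfS0 : 0 ≤ f S := hf ▸ hmono ∅ S (Finset.empty_subset S)
  -- step bound
  have step : ∀ j : ℕ, j < Fintype.card N →
      f S ≤ f (prefixSet σ j) + (k:ℝ) * (f (prefixSet σ (j+1)) - f (prefixSet σ j)) := by
    intro j hj
    set G := prefixSet σ j with hG
    have hsucc : prefixSet σ (j+1) = insert (σ ⟨j, hj⟩) G := prefixSet_succ σ hj
    set δ : ℝ := f (prefixSet σ (j+1)) - f G with hδ
    have hδ0 : 0 ≤ δ := by
      rw [hδ, hsucc, sub_nonneg]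
      exact hmono _ _ (Finset.subset_insert _ _)
    have hgreedy := (hσφ ⟨j, hj⟩).1
    have hb : ∀ i ∈ S \ G, f (insert i G) - f G ≤ δ := by
      intro i hi
      have hiG : i ∉ G := (Finset.mem_sdiff.1 hi).2
      have := hgreedy i hiG
      rw [hδ, hsucc]
      simp only [hG] at this ⊢
      linarith
    have h1 : f S ≤ f (G ∪ S) := hmono _ _ Finset.subset_union_right
    have h2 := union_bound hsub S G
    have h3 : ∑ i ∈ S \ G, (f (insert i G) - f G) ≤ ∑ _i ∈ S \ G, δ :=
      Finset.sum_le_sum hb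
    have h4 : ∑ _i ∈ S \ G, δ = ((S \ G).card : ℝ) * δ := by
      rw [Finset.sum_const, nsmul_eq_mul]
    have h5 : ((S \ G).card : ℝ) ≤ (k:ℝ) := by
      have : (S \ G).card ≤ S.card := Finset.card_le_card (Finset.sdiff_subset)
      exact_mod_cast hS ▸ this
    have h6 : ((S \ G).card : ℝ) * δ ≤ (k:ℝ) * δ := mul_le_mul_of_nonneg_right h5 hδ0
    linarith
  -- recursion
  have hrec : ∀ j : ℕ, j ≤ k → f S - f (prefixSet σ j) ≤ (1 - 1/(k:ℝ))^j * f S := by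
    intro j
    induction j with
    | zero =>
      intro _
      simp [prefixSet_zero, hf]
    | succ j ih =>
      intro hj
      have hjk : j < k := hj
      have hjN : j < Fintype.card N := lt_of_lt_of_le hjk hkN
      have hstep := step j hjN
      have ihj := ih (le_of_lt hjk)
      have key : f S - f (prefixSet σ (j+1)) ≤ (1 - 1/(k:ℝ)) * (f S - f (prefixSet σ j)) := by
        have hδ : (f S - f (prefixSet σ j)) / (k:ℝ) ≤ f (prefixSet σ (j+1)) - f (prefixSet σ j) := by
          rw [div_le_iff₀ hk0]
          nlinarith
        have : (1 - 1/(k:ℝ)) * (f S - f (prefixSet σ j))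
            = (f S - f (prefixSet σ j)) - (f S - f (prefixSet σ j)) / (k:ℝ) := by
          field_simp
        linarith
      calc f S - f (prefixSet σ (j+1)) ≤ (1 - 1/(k:ℝ)) * (f S - f (prefixSet σ j)) := key
        _ ≤ (1 - 1/(k:ℝ)) * ((1 - 1/(k:ℝ))^j * f S) := mul_le_mul_of_nonneg_left ihj hq0
        _ = (1 - 1/(k:ℝ))^(j+1) * f S := by ring
  have main := hrec k le_rfl
  have hfirst : (1 - (1 - 1 / (k : ℝ)) ^ k) * f S ≤ f (prefixSet σ k) := by nlinarith
  refine ⟨hfirst, ?_⟩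
  have hexp : (1 - 1/(k:ℝ))^k ≤ 1 / Real.exp 1 := by
    have h1 : 1 - 1/(k:ℝ) ≤ Real.exp (-(1/(k:ℝ))) := by
      have := Real.add_one_le_exp (-(1/(k:ℝ)))
      linarith
    have h2 : (1 - 1/(k:ℝ))^k ≤ (Real.exp (-(1/(k:ℝ))))^k := pow_le_pow_left₀ hq0 h1 k
    have h3 : (Real.exp (-(1/(k:ℝ))))^k = Real.exp ((k:ℝ) * (-(1/(k:ℝ)))) := by
      rw [← Real.exp_nat_mul]
    have h4 : (k:ℝ) * (-(1/(k:ℝ))) = -1 := by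
      field_simp
    rw [h3, h4, Real.exp_neg] at h2
    rw [inv_eq_one_div] at h2
    exact h2
  have : (1 - 1 / Real.exp 1) * f S ≤ (1 - (1 - 1/(k:ℝ))^k) * f S := by nlinarith
  linarith
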